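/- arXiv:2301.11922 — 3 statements merged into one kernel-verified Lean document; each statement's English description precedes it below -/
import Mathlib

section
/- If w ≥ w_obj > 0, I = ⌊w/w_obj⌋ and N ∈ {I, I+1} with N ≥ 1, then w/N ∈ [w_obj/2, 2·w_obj]; that is, each fragment produced by conservative splitting has weight between w_obj/2 and 2·w_obj. -/
/-- Each fragment produced by conservative splitting of a particle of weight
`w ≥ w_obj` into `N ∈ {⌊w/w_obj⌋, ⌊w/w_obj⌋+1}` equal parts (with `N ≥ 1`)
has weight `w/N ∈ [w_obj/2, 2·w_obj]`. -/
theorem fragment_weight_bounds (w wobj : ℝ) (hwobj : 0 < wobj) (hw : wobj ≤ w)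
    (N : ℕ) (hN : N = ⌊w / wobj⌋₊ ∨ N = ⌊w / wobj⌋₊ + 1) (hN1 : 1 ≤ N) :
    wobj / 2 ≤ w / N ∧ w / N ≤ 2 * wobj := by
  set x : ℝ := w / wobj with hx
  have hx1 : 1 ≤ x := (one_le_div hwobj).mpr hw
  have hx0 : 0 ≤ x := by linarith
  have hI1 : 1 ≤ ⌊x⌋₊ := Nat.one_le_floor_iff x |>.mpr hx1
  have hfl : (⌊x⌋₊ : ℝ) ≤ x := Nat.floor_le hx0
  have hfu : x < ⌊x⌋₊ + 1 := Nat.lt_floor_add_one x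
  have hI1' : (1 : ℝ) ≤ (⌊x⌋₊ : ℝ) := by exact_mod_cast hI1
  have hwx : w = wobj * x := by rw [hx]; field_simp [hwobj.ne']
  rcases hN with h | h
  · subst h
    have hNpos : (0 : ℝ) < (⌊x⌋₊ : ℝ) := by linarith
    constructor
    · rw [div_le_div_iff₀ (by norm_num) hNpos]
      nlinarith
    · rw [div_le_iff₀ hNpos]
      nlinarith
  · subst h
    have hNpos : (0 : ℝ) < ((⌊x⌋₊ + 1 : ℕ) : ℝ) := by positivity
    push_cast at hNpos ⊢
    constructor
    · rw [div_le_div_iff₀ (by norm_num) (by linarith : (0:ℝ) < (⌊x⌋₊:ℝ) + 1)]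
      nlinarith
    · rw [div_le_iff₀ (by linarith : (0:ℝ) < (⌊x⌋₊:ℝ) + 1)]
      nlinarith
end

section
/- In the conservative splitting chain started with at most N_obj particles of total mass N_obj·w_obj, the number of nonzero particles satisfies N_l ≤ 6·N_obj for all l ≥ 0, and the minimal nonzero weight satisfies min_j X_l^j ≥ w_obj/10 for all l ≥ 1. -/
/-- Result of treating one particle of weight `w`: Russian Roulette if
`w < w_obj` (killed, or survives with weight `w_obj`), conservative splitting
into `N ∈ {⌊w/w_obj⌋, ⌊w/w_obj⌋+1}` equal parts if `w ≥ w_obj`. -/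
def SplitResult (wobj w : ℝ) (l : List ℝ) : Prop :=
  (w < wobj ∧ (l = [] ∨ l = [wobj])) ∨
  (wobj ≤ w ∧ ∃ N : ℕ, 1 ≤ N ∧ (N = ⌊w / wobj⌋₊ ∨ N = ⌊w / wobj⌋₊ + 1) ∧
    l = List.replicate N (w / N))

/-- One step of the conservative splitting chain with no source term: each
particle undergoes Russian Roulette or conservative splitting, then all
resulting weights are renormalized by a common factor restoring the total
mass `N_obj · w_obj`. -/
def StepRel (Nobj : ℕ) (wobj : ℝ) (X Y : List ℝ) : Prop :=
  ∃ ls : List (List ℝ), List.Forall₂ (fun w l => SplitResult wobj w l) X ls ∧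
    0 < ls.flatten.sum ∧
    Y = ls.flatten.map (fun w => ((Nobj : ℝ) * wobj / ls.flatten.sum) * w)

/-- The invariant preserved by the chain (for `l ≥ 1`). -/
def ChainInv (Nobj : ℕ) (wobj : ℝ) (X : List ℝ) : Prop :=
  (∀ w ∈ X, 0 < w) ∧ X.sum = (Nobj : ℝ) * wobj ∧
    ((X.length : ℝ) ≤ 5 * Nobj) ∧ (∀ w ∈ X, wobj / 10 ≤ w) ∧
    (∀ v ∈ X, ∀ w ∈ X, v ≤ 4 * w)

lemma sum_map_mul (c : ℝ) (l : List ℝ) :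
    (l.map (fun w => c * w)).sum = c * l.sum := by
  induction l with
  | nil => simp
  | cons a t ih => simp [ih, mul_add]

lemma length_mul_le_sum {c : ℝ} {l : List ℝ} (h : ∀ w ∈ l, c ≤ w) :
    (l.length : ℝ) * c ≤ l.sum := by
  induction l with
  | nil => simp
  | cons a t ih =>
    have h1 := h a (by simp)
    have h2 := ih (fun w hw => h w (by simp [hw]))
    simp only [List.length_cons, List.sum_cons]
    push_cast
    linarith

lemma split_facts {wobj w : ℝ} {l : List ℝ} (hwobj : 0 < wobj) (hw : 0 < w)
    (h : SplitResult wobj w l) :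
    (∀ p ∈ l, wobj / 2 ≤ p ∧ p ≤ 2 * wobj) ∧ l.sum ≤ w + wobj ∧
      (l.length : ℝ) ≤ 1 + w / wobj := by
  rcases h with ⟨hlt, hl | hl⟩ | ⟨hle, N, hN1, hNeq, hl⟩
  · subst hl
    refine ⟨by simp, by simp; positivity, by simp; positivity⟩
  · subst hl
    refine ⟨?_, ?_, ?_⟩
    · intro p hp
      simp only [List.mem_singleton] at hp
      subst hp
      constructor <;> linarith
    · simp; linarith
    · simp; positivity
  · subst hl
    have hN0 : (0:ℝ) < N := by exact_mod_cast hN1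
    have hfl : (⌊w / wobj⌋₊ : ℝ) ≤ w / wobj := Nat.floor_le (by positivity)
    have hfu : w / wobj < (⌊w / wobj⌋₊ : ℝ) + 1 := Nat.lt_floor_add_one _
    have hdiv : w / wobj * wobj = w := div_mul_cancel₀ _ (ne_of_gt hwobj)
    have hNle : (N : ℝ) * wobj ≤ w + wobj := by
      rcases hNeq with h | h <;> (rw [h]; push_cast; nlinarith)
    have hNge : w < ((N : ℝ) + 1) * wobj := by
      rcases hNeq with h | h <;> (rw [h]; push_cast; nlinarith)
    have hp1 : wobj / 2 ≤ w / N := by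
      rw [le_div_iff₀ hN0]; nlinarith
    have hN1' : (1:ℝ) ≤ N := by exact_mod_cast hN1
    have hp2 : w / N ≤ 2 * wobj := by
      rw [div_le_iff₀ hN0]; nlinarith
    refine ⟨?_, ?_, ?_⟩
    · intro p hp
      rw [List.eq_of_mem_replicate hp]
      exact ⟨hp1, hp2⟩
    · have hNw : (N : ℝ) * (w / N) = w := by field_simp
      rw [List.sum_replicate, nsmul_eq_mul, hNw]
      linarith
    · rw [List.length_replicate]
      rw [show (1:ℝ) + w / wobj = (w + wobj) / wobj by field_simp; ring]
      rw [le_div_iff₀ hwobj]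
      exact hNle

lemma forall₂_flatten_facts {wobj : ℝ} (hwobj : 0 < wobj) {X : List ℝ}
    {ls : List (List ℝ)}
    (h : List.Forall₂ (fun w l => SplitResult wobj w l) X ls)
    (hpos : ∀ w ∈ X, 0 < w) :
    (∀ p ∈ ls.flatten, wobj / 2 ≤ p ∧ p ≤ 2 * wobj) ∧
      ls.flatten.sum ≤ X.sum + X.length * wobj ∧
      (ls.flatten.length : ℝ) ≤ (X.length : ℝ) + X.sum / wobj := by
  induction h with
  | nil => simp
  | @cons w l X' ls' hwl htail ih =>
    have hw : 0 < w := hpos w (by simp)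
    obtain ⟨ih1, ih2, ih3⟩ := ih (fun x hx => hpos x (by simp [hx]))
    obtain ⟨f1, f2, f3⟩ := split_facts hwobj hw hwl
    refine ⟨?_, ?_, ?_⟩
    · intro p hp
      rw [List.flatten_cons, List.mem_append] at hp
      rcases hp with hp | hp
      · exact f1 p hp
      · exact ih1 p hp
    · simp only [List.flatten_cons, List.sum_append, List.sum_cons,
        List.length_cons]
      push_cast
      nlinarith
    · simp only [List.flatten_cons, List.length_append, List.length_cons,
        List.sum_cons, add_div]
      push_cast
      linarith

lemma small_flatten {wobj : ℝ} {X : List ℝ} {ls : List (List ℝ)}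
    (h : List.Forall₂ (fun w l => SplitResult wobj w l) X ls)
    (hall : ∀ w ∈ X, w < wobj) :
    (∀ p ∈ ls.flatten, p = wobj) ∧ ls.flatten.length ≤ X.length := by
  induction h with
  | nil => simp
  | @cons w l X' ls' hwl htail ih =>
    have hw : w < wobj := hall w (by simp)
    obtain ⟨ih1, ih2⟩ := ih (fun x hx => hall x (by simp [hx]))
    have hl : l = [] ∨ l = [wobj] := by
      rcases hwl with ⟨_, hl⟩ | ⟨hle, _⟩
      · exact hl
      · exact absurd hle (not_le.mpr hw)
    constructor
    · intro p hp
      rw [List.flatten_cons, List.mem_append] at hp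
      rcases hp with hp | hp
      · rcases hl with hl | hl <;> subst hl <;> simp_all
      · exact ih1 p hp
    · rw [List.flatten_cons, List.length_append, List.length_cons]
      have hl1 : l.length ≤ 1 := by rcases hl with hl | hl <;> simp [hl]
      omega

lemma core_step {Nobj : ℕ} {wobj : ℝ} (hNobj : 1 ≤ Nobj) (hwobj : 0 < wobj)
    (fl : List ℝ) (hS : 0 < fl.sum) (hS5 : fl.sum ≤ 5 * ((Nobj : ℝ) * wobj))
    (hp : ∀ p ∈ fl, wobj / 2 ≤ p ∧ p ≤ 2 * wobj)
    (hlen : (fl.length : ℝ) ≤ 5 * Nobj) :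
    ChainInv Nobj wobj (fl.map (fun w => ((Nobj : ℝ) * wobj / fl.sum) * w)) := by
  set c : ℝ := (Nobj : ℝ) * wobj / fl.sum with hc_def
  have hN0 : (0:ℝ) < Nobj := by exact_mod_cast hNobj
  have hNw : 0 < (Nobj : ℝ) * wobj := mul_pos hN0 hwobj
  have hc : 0 < c := div_pos hNw hS
  have hc5 : 1 / 5 ≤ c := by
    rw [hc_def, le_div_iff₀ hS]; linarith
  refine ⟨?_, ?_, ?_, ?_, ?_⟩
  · intro y hy
    obtain ⟨p, hpmem, rfl⟩ := List.mem_map.mp hy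
    have := (hp p hpmem).1
    nlinarith
  · rw [sum_map_mul, hc_def, div_mul_cancel₀ _ (ne_of_gt hS)]
  · rw [List.length_map]; exact hlen
  · intro y hy
    obtain ⟨p, hpmem, rfl⟩ := List.mem_map.mp hy
    have h1 := (hp p hpmem).1
    nlinarith
  · intro v hv y hy
    obtain ⟨p, hpmem, rfl⟩ := List.mem_map.mp hv
    obtain ⟨q, hqmem, rfl⟩ := List.mem_map.mp hy
    have h1 := (hp p hpmem).2
    have h2 := (hp q hqmem).1
    nlinarith

lemma step_of_len' {Nobj : ℕ} {wobj : ℝ} (hNobj : 1 ≤ Nobj) (hwobj : 0 < wobj)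
    {X Y : List ℝ} (h : StepRel Nobj wobj X Y)
    (hpos : ∀ w ∈ X, 0 < w) (hsum : X.sum = (Nobj : ℝ) * wobj)
    (hlen : (X.length : ℝ) ≤ 4 * Nobj) : ChainInv Nobj wobj Y := by
  obtain ⟨ls, hf, hS, rfl⟩ := h
  obtain ⟨h1, h2, h3⟩ := forall₂_flatten_facts hwobj hf hpos
  have hN0 : (0:ℝ) < Nobj := by exact_mod_cast hNobj
  have hNdiv : X.sum / wobj = (Nobj : ℝ) := by
    rw [hsum, mul_div_assoc, div_self (ne_of_gt hwobj), mul_one]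
  have hS5 : ls.flatten.sum ≤ 5 * ((Nobj : ℝ) * wobj) := by
    have hmul : (X.length : ℝ) * wobj ≤ 4 * (Nobj : ℝ) * wobj := by
      nlinarith
    linarith [h2, hsum, hmul]
  have hlen5 : ((ls.flatten.length : ℝ)) ≤ 5 * Nobj := by
    rw [hNdiv] at h3; linarith
  exact core_step hNobj hwobj _ hS hS5 h1 hlen5

lemma inv_step {Nobj : ℕ} {wobj : ℝ} (hNobj : 1 ≤ Nobj) (hwobj : 0 < wobj)
    {X Y : List ℝ} (h : StepRel Nobj wobj X Y)
    (hInv : ChainInv Nobj wobj X) : ChainInv Nobj wobj Y := by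
  obtain ⟨hpos, hsum, hlen, hmin, hratio⟩ := hInv
  by_cases hall : ∀ w ∈ X, w < wobj
  · obtain ⟨ls, hf, hS, rfl⟩ := h
    obtain ⟨hp, hk⟩ := small_flatten hf hall
    have hsum_eq : ls.flatten.sum = ls.flatten.length • wobj :=
      List.sum_eq_card_nsmul _ _ hp
    have hk' : ((ls.flatten.length : ℝ)) ≤ (X.length : ℝ) := by
      exact_mod_cast hk
    apply core_step hNobj hwobj _ hS
    · rw [hsum_eq, nsmul_eq_mul]
      nlinarith
    · intro p hpm
      rw [hp p hpm]
      constructor <;> linarith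
    · linarith
  · push_neg at hall
    obtain ⟨w0, hw0mem, hw0⟩ := hall
    have hmin4 : ∀ w ∈ X, wobj / 4 ≤ w := by
      intro w hw
      have := hratio w0 hw0mem w hw
      linarith
    have hlb := length_mul_le_sum hmin4
    have hlen4 : (X.length : ℝ) ≤ 4 * Nobj := by
      rw [hsum] at hlb
      have hN0 : (0:ℝ) < Nobj := by exact_mod_cast hNobj
      nlinarith
    exact step_of_len' hNobj hwobj h hpos hsum hlen4

/-- For the conservative splitting chain started with at most `N_obj` particles
of total mass `N_obj·w_obj`, the number of particles satisfies
`N_l ≤ 6·N_obj` for all `l ≥ 0` and the minimal nonzero weight is at least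
`w_obj/10` for all `l ≥ 1`. -/
theorem conservative_chain_bounds (Nobj : ℕ) (hNobj : 1 ≤ Nobj)
    (wobj : ℝ) (hwobj : 0 < wobj) (X : ℕ → List ℝ)
    (hpos : ∀ w ∈ X 0, 0 < w)
    (hlen : (X 0).length ≤ Nobj)
    (hsum : (X 0).sum = (Nobj : ℝ) * wobj)
    (hstep : ∀ l, StepRel Nobj wobj (X l) (X (l + 1))) :
    (∀ l, (X l).length ≤ 6 * Nobj) ∧
    (∀ l, 1 ≤ l → ∀ w ∈ X l, wobj / 10 ≤ w) := by
  have hN0 : (0:ℝ) < Nobj := by exact_mod_cast hNobj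
  have hlen0 : ((X 0).length : ℝ) ≤ 4 * Nobj := by
    have : ((X 0).length : ℝ) ≤ (Nobj : ℝ) := by exact_mod_cast hlen
    linarith
  have hbase : ChainInv Nobj wobj (X 1) :=
    step_of_len' hNobj hwobj (hstep 0) hpos hsum hlen0
  have hInv : ∀ l : ℕ, ChainInv Nobj wobj (X (l + 1)) := by
    intro l
    induction l with
    | zero => exact hbase
    | succ n ih => exact inv_step hNobj hwobj (hstep (n + 1)) ih
  constructor
  · intro l
    cases l with
    | zero => omega
    | succ n =>
      have h5 := (hInv n).2.2.1
      have : ((X (n + 1)).length : ℝ) ≤ 6 * Nobj := by linarith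
      exact_mod_cast this
  · intro l hl w hw
    cases l with
    | zero => omega
    | succ n => exact (hInv n).2.2.2.1 w hw
end

section
/- Under the event that all N_obj particles of weights w_obj(1+ε_j) (Σε_j=0, Σ|ε_j|=ε<1) survive Russian Roulette without splitting, and after renormalization to total mass N_obj·w_obj, the new deviation satisfies Σ_j |X'_j - w_obj| ≤ ε·w_obj·(N_obj-1)/N_obj. Consequently, iterating, the state converges to the uniform distribution with probability at least ∏_{a≥1}(1 - ε((N_obj-1)/N_obj)^a) ≥ 1 - ε·N_obj. -/
lemma prod_one_sub_ge {α : Type*} [DecidableEq α] (s : Finset α) (x : α → ℝ)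
    (h0 : ∀ a, 0 ≤ x a) (h1 : ∀ a, x a ≤ 1) :
    1 - ∑ a ∈ s, x a ≤ ∏ a ∈ s, (1 - x a) := by
  induction s using Finset.induction_on with
  | empty => simp
  | @insert b t hb ih =>
    rw [Finset.sum_insert hb, Finset.prod_insert hb]
    have hs : 0 ≤ ∑ a ∈ t, x a := Finset.sum_nonneg fun a _ => h0 a
    nlinarith [h0 b, h1 b, ih]

/-- Under the event that all `N_obj` particles of weights `w_obj(1+ε_j)`
(`Σ ε_j = 0`, `Σ |ε_j| = ε < 1`) survive Russian Roulette without splitting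
(the survivors of RR get weight `w_obj`, the others keep `w_obj(1+ε_j)`) and
after renormalization by `N_obj/(N_obj+ε/2)`, the new ℓ¹ deviation from the
uniform vector is at most `ε·w_obj·(N_obj-1)/N_obj`; moreover, iterating, the
convergence probability `∏_{a≥1}(1-ε((N_obj-1)/N_obj)^a)` is at least
`1 - ε·N_obj`. -/
theorem deviation_contracts (Nobj : ℕ) (hN : 1 ≤ Nobj)
    (wobj ε : ℝ) (hw : 0 < wobj) (hε0 : 0 < ε) (hε1 : ε < 1)
    (e : Fin Nobj → ℝ) (habs : ∀ j, |e j| < 1)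
    (hsum0 : ∑ j, e j = 0) (hsumabs : ∑ j, |e j| = ε) :
    (∑ j, |((Nobj : ℝ) / ((Nobj : ℝ) + ε / 2)) *
        (if e j ≤ 0 then wobj else wobj * (1 + e j)) - wobj|
      ≤ ε * wobj * ((Nobj : ℝ) - 1) / Nobj) ∧
    (1 - ε * Nobj ≤ ∏' a : ℕ, (1 - ε * (((Nobj : ℝ) - 1) / Nobj) ^ (a + 1))) := by
  -- rule out Nobj = 1
  rcases eq_or_lt_of_le hN with h1 | h2
  · exfalso
    have : Nobj = 1 := h1.symm
    subst this
    rw [Fin.sum_univ_one] at hsum0 hsumabs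
    rw [hsum0] at hsumabs
    simp at hsumabs
    linarith
  have h2' : (2 : ℝ) ≤ (Nobj : ℝ) := by exact_mod_cast h2
  set N : ℝ := (Nobj : ℝ) with hNdef
  have hN0 : (0 : ℝ) < N := by linarith
  have hden : (0 : ℝ) < N + ε / 2 := by linarith
  -- sum of positive parts
  have hmax : ∀ j, max (e j) 0 = (e j + |e j|) / 2 := by
    intro j
    rcases le_or_gt (e j) 0 with h | h
    · rw [max_eq_right h, abs_of_nonpos h]; ring
    · rw [max_eq_left h.le, abs_of_pos h]; ring
  have hsummax : ∑ j, max (e j) 0 = ε / 2 := by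
    calc ∑ j, max (e j) 0 = ∑ j, (e j + |e j|) / 2 := Finset.sum_congr rfl fun j _ => hmax j
    _ = ((∑ j, e j) + ∑ j, |e j|) / 2 := by rw [← Finset.sum_add_distrib, Finset.sum_div]
    _ = ε / 2 := by rw [hsum0, hsumabs]; ring
  have hup : ∀ j, e j ≤ ε / 2 := by
    intro j
    calc e j ≤ max (e j) 0 := le_max_left _ _
    _ ≤ ∑ k, max (e k) 0 := Finset.single_le_sum (f := fun k => max (e k) 0)
          (fun k _ => le_max_right _ _) (Finset.mem_univ j)
    _ = ε / 2 := hsummax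
  constructor
  · -- pointwise bound
    have key : ∀ j, |N / (N + ε / 2) * (if e j ≤ 0 then wobj else wobj * (1 + e j)) - wobj|
        ≤ wobj / (N + ε / 2) * (ε / 2 + (N - 2) * max (e j) 0) := by
      intro j
      by_cases hj : e j ≤ 0
      · rw [if_pos hj, max_eq_right hj]
        have heq : N / (N + ε / 2) * wobj - wobj = -(wobj * (ε / 2) / (N + ε / 2)) := by
          field_simp; ring
        rw [heq, abs_neg, abs_of_nonneg (by positivity)]
        rw [mul_zero, add_zero]
        ring_nf
        exact le_rfl
      · rw [if_neg hj]
        push_neg at hj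
        rw [max_eq_left hj.le]
        have heq : N / (N + ε / 2) * (wobj * (1 + e j)) - wobj
            = wobj * (N * e j - ε / 2) / (N + ε / 2) := by
          field_simp; ring
        rw [heq, abs_div, abs_of_pos hden, abs_mul, abs_of_pos hw]
        have habsb : |N * e j - ε / 2| ≤ ε / 2 + (N - 2) * e j := by
          rw [abs_le]
          constructor
          · nlinarith [hj.le]
          · nlinarith [hup j]
        calc wobj * |N * e j - ε / 2| / (N + ε / 2)
            ≤ wobj * (ε / 2 + (N - 2) * e j) / (N + ε / 2) := by gcongr
        _ = wobj / (N + ε / 2) * (ε / 2 + (N - 2) * e j) := by ring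
      -- done
    calc ∑ j, |N / (N + ε / 2) * (if e j ≤ 0 then wobj else wobj * (1 + e j)) - wobj|
        ≤ ∑ j, wobj / (N + ε / 2) * (ε / 2 + (N - 2) * max (e j) 0) :=
          Finset.sum_le_sum fun j _ => key j
      _ = wobj / (N + ε / 2) * (N * (ε / 2) + (N - 2) * (ε / 2)) := by
          rw [← Finset.mul_sum, Finset.sum_add_distrib, ← Finset.mul_sum, hsummax,
            Finset.sum_const, Finset.card_univ, Fintype.card_fin, nsmul_eq_mul]
      _ = ε * wobj * (N - 1) / (N + ε / 2) := by ring
      _ ≤ ε * wobj * (N - 1) / N := by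
          exact div_le_div_of_nonneg_left
            (mul_nonneg (mul_nonneg hε0.le hw.le) (by linarith)) hN0 (by linarith)
  · -- second part
    set q : ℝ := (N - 1) / N with hq
    have hq0 : 0 ≤ q := div_nonneg (by linarith) (by linarith)
    have hq1 : q < 1 := by rw [hq, div_lt_one hN0]; linarith
    set f : ℕ → ℝ := fun a => 1 - ε * q ^ (a + 1) with hf
    by_cases hM : Multipliable f
    · refine ge_of_tendsto' hM.hasProd fun s => ?_
      have hsum : ∑ a ∈ s, ε * q ^ (a + 1) ≤ ε * (N - 1) := by
        have hts : ∑' a : ℕ, q ^ (a + 1) = q / (1 - q) := by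
          have : ∀ a : ℕ, q ^ (a + 1) = q * q ^ a := fun a => by ring
          rw [tsum_congr this, tsum_mul_left, tsum_geometric_of_lt_one hq0 hq1,
            div_eq_mul_inv]
        have hsummable : Summable (fun a : ℕ => q ^ (a + 1)) := by
          have : Summable (fun a : ℕ => q * q ^ a) :=
            (summable_geometric_of_lt_one hq0 hq1).mul_left q
          exact this.congr fun a => by ring
        have h1 : ∑ a ∈ s, q ^ (a + 1) ≤ q / (1 - q) := by
          rw [← hts]
          exact Summable.sum_le_tsum s (fun a _ => pow_nonneg hq0 _) hsummable
        have h2 : q / (1 - q) = N - 1 := by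
          rw [hq]; field_simp; ring
        calc ∑ a ∈ s, ε * q ^ (a + 1) = ε * ∑ a ∈ s, q ^ (a + 1) := by
              rw [Finset.mul_sum]
          _ ≤ ε * (N - 1) := by rw [h2] at h1; nlinarith
      have := prod_one_sub_ge s (fun a => ε * q ^ (a + 1))
        (fun a => mul_nonneg hε0.le (pow_nonneg hq0 _))
        (fun a => by
          have h : q ^ (a + 1) ≤ 1 := pow_le_one₀ hq0 hq1.le
          show ε * q ^ (a + 1) ≤ 1
          nlinarith [pow_nonneg hq0 (a+1)])
      calc 1 - ε * N ≤ 1 - ∑ a ∈ s, ε * q ^ (a + 1) := by nlinarith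
        _ ≤ ∏ a ∈ s, (1 - ε * q ^ (a + 1)) := this
        _ = ∏ a ∈ s, f a := rfl
    · rw [tprod_eq_one_of_not_multipliable hM]
      nlinarith
end
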